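/- arXiv:1806.09311 — 4 statements merged into one kernel-verified Lean document; each statement's English description precedes it below -/
import Mathlib

section
/- Representation formula for the one-dimensional Helmholtz scattering problem: the function u is twice continuously differentiable on ℝ and satisfies −u″(x) − k² u(x) = f(x) for all x ∈ ℝ; moreover u′(x) = ik u(x) for all x ≥ R and u′(x) = −ik u(x) for all x ≤ −R, so u is outgoing and satisfies the Sommerfeld radiation condition. -/
open MeasureTheory

noncomputable section

/-- Derivative of `y ↦ ∫_{-∞}^y h`. -/
lemma hasDerivAt_integral_Iio (h : ℝ → ℂ) (hc : Continuous h) (hi : Integrable h) (x : ℝ) :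
    HasDerivAt (fun y => ∫ t in Set.Iio y, h t) (h x) x := by
  have key : ∀ y : ℝ, (∫ t in Set.Iio y, h t)
      = (∫ t in Set.Iic (0:ℝ), h t) + ∫ t in (0:ℝ)..y, h t := by
    intro y
    rw [← MeasureTheory.integral_Iic_eq_integral_Iio,
      ← intervalIntegral.integral_Iic_sub_Iic hi.integrableOn hi.integrableOn]
    ring
  have hd : HasDerivAt (fun y => (∫ t in Set.Iic (0:ℝ), h t) + ∫ t in (0:ℝ)..y, h t) (h x) x :=
    (intervalIntegral.integral_hasDerivAt_right hi.intervalIntegrable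
      (hc.stronglyMeasurableAtFilter volume (nhds x)) hc.continuousAt).const_add _
  exact hd.congr_of_eventuallyEq (Filter.Eventually.of_forall fun y => (key y))

/-- Derivative of `y ↦ ∫_y^∞ h`. -/
lemma hasDerivAt_integral_Ioi (h : ℝ → ℂ) (hc : Continuous h) (hi : Integrable h) (x : ℝ) :
    HasDerivAt (fun y => ∫ t in Set.Ioi y, h t) (-(h x)) x := by
  have key : ∀ y : ℝ, (∫ t in Set.Ioi y, h t)
      = (∫ t, h t) - ∫ t in Set.Iio y, h t := by
    intro y
    rw [← MeasureTheory.integral_Iic_eq_integral_Iio,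
      ← intervalIntegral.integral_Iic_add_Ioi hi.integrableOn hi.integrableOn]
    ring
  have hd : HasDerivAt (fun y => (∫ t, h t) - ∫ t in Set.Iio y, h t) (-(h x)) x :=
    (hasDerivAt_integral_Iio h hc hi x).const_sub _
  exact hd.congr_of_eventuallyEq (Filter.Eventually.of_forall fun y => (key y))

/-- The exact outgoing solution of the one-dimensional Helmholtz problem:
`u(x) = −(1/(2ik)) e^{−ikx} ∫_x^∞ e^{ikt} f(t) dt − (1/(2ik)) e^{ikx} ∫_{−∞}^x e^{−ikt} f(t) dt`. -/
def usol (k : ℝ) (f : ℝ → ℂ) (x : ℝ) : ℂ :=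
  -(1 / (2 * Complex.I * k)) * Complex.exp (-(Complex.I * k * x)) *
      (∫ t in Set.Ioi x, Complex.exp (Complex.I * k * t) * f t)
    - (1 / (2 * Complex.I * k)) * Complex.exp (Complex.I * k * x) *
      (∫ t in Set.Iio x, Complex.exp (-(Complex.I * k * t)) * f t)

/-- Representation formula for the one-dimensional Helmholtz scattering problem:
`u` is twice continuously differentiable, satisfies `−u″ − k²u = f` on `ℝ`, and
`u′ = iku` for `x ≥ R`, `u′ = −iku` for `x ≤ −R` (outgoing/Sommerfeld condition). -/
theorem helmholtz_representation_1d (k R : ℝ) (f : ℝ → ℂ)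
    (hk : 0 < k) (hR : 0 < R) (hf : Continuous f)
    (hsupp : Function.support f ⊆ Set.Icc (-R) R) :
    ContDiff ℝ 2 (usol k f) ∧
      (∀ x : ℝ, -deriv (deriv (usol k f)) x - k ^ 2 * usol k f x = f x) ∧
      (∀ x : ℝ, R ≤ x → deriv (usol k f) x = Complex.I * k * usol k f x) ∧
      (∀ x : ℝ, x ≤ -R → deriv (usol k f) x = -(Complex.I * k) * usol k f x) := by
  have hkC : (k : ℂ) ≠ 0 := Complex.ofReal_ne_zero.mpr hk.ne'
  have hI : Complex.I ≠ 0 := Complex.I_ne_zero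
  set c : ℂ := 1 / (2 * Complex.I * k) with hcdef
  -- compact support facts
  have hcs : HasCompactSupport f := by
    refine HasCompactSupport.intro (isCompact_Icc (a := -R) (b := R)) ?_
    intro x hx
    by_contra hne
    exact hx (hsupp hne)
  have hcp : Continuous (fun t : ℝ => Complex.exp (Complex.I * k * t) * f t) :=
    (Complex.continuous_exp.comp (by continuity)).mul hf
  have hcm : Continuous (fun t : ℝ => Complex.exp (-(Complex.I * k * t)) * f t) :=
    (Complex.continuous_exp.comp (by continuity)).mul hf
  have hip : Integrable (fun t : ℝ => Complex.exp (Complex.I * k * t) * f t) :=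
    hcp.integrable_of_hasCompactSupport (hcs.mul_left)
  have him : Integrable (fun t : ℝ => Complex.exp (-(Complex.I * k * t)) * f t) :=
    hcm.integrable_of_hasCompactSupport (hcs.mul_left)
  -- the two "wave" pieces
  set A : ℝ → ℂ := fun x => Complex.exp (-(Complex.I * k * x)) *
      (∫ t in Set.Ioi x, Complex.exp (Complex.I * k * t) * f t) with hA
  set B : ℝ → ℂ := fun x => Complex.exp (Complex.I * k * x) *
      (∫ t in Set.Iio x, Complex.exp (-(Complex.I * k * t)) * f t) with hB
  have husol : usol k f = fun x => -c * A x - c * B x := by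
    funext x; simp only [usol, hA, hB]; ring
  have hexp : ∀ x : ℝ, Complex.exp (-(Complex.I * k * x)) * Complex.exp (Complex.I * k * x) = 1 := by
    intro x; rw [← Complex.exp_add]; ring_nf; exact Complex.exp_zero
  -- derivatives of exponentials
  have hep : ∀ x : ℝ, HasDerivAt (fun y : ℝ => Complex.exp (Complex.I * k * y))
      (Complex.I * k * Complex.exp (Complex.I * k * x)) x := by
    intro x
    have := (((hasDerivAt_id x).ofReal_comp).const_mul (Complex.I * k)).cexp
    simpa [mul_comm] using this
  have hem : ∀ x : ℝ, HasDerivAt (fun y : ℝ => Complex.exp (-(Complex.I * k * y)))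
      (-(Complex.I * k) * Complex.exp (-(Complex.I * k * x))) x := by
    intro x
    have := ((((hasDerivAt_id x).ofReal_comp).const_mul (Complex.I * k)).neg).cexp
    simpa [mul_comm] using this
  -- derivatives of A and B
  have hA' : ∀ x, HasDerivAt A (-(Complex.I * k) * A x - f x) x := by
    intro x
    have h2 := hasDerivAt_integral_Ioi _ hcp hip x
    have := (hem x).mul h2
    refine this.congr_deriv ?_
    simp only [hA]
    linear_combination (-(f x)) * hexp x
  have hB' : ∀ x, HasDerivAt B (Complex.I * k * B x + f x) x := by
    intro x
    have h2 := hasDerivAt_integral_Iio _ hcm him x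
    have := (hep x).mul h2
    refine this.congr_deriv ?_
    simp only [hB]
    linear_combination (f x) * hexp x
  -- first derivative of u
  have hu' : ∀ x, HasDerivAt (usol k f) ((A x - B x) / 2) x := by
    intro x
    rw [husol]
    have := ((hA' x).const_mul (-c)).sub ((hB' x).const_mul c)
    refine this.congr_deriv ?_
    simp only [hcdef]
    field_simp
    ring
  have hderiv1 : deriv (usol k f) = fun x => (A x - B x) / 2 :=
    funext fun x => (hu' x).deriv
  -- second derivative
  have hu'' : ∀ x, HasDerivAt (fun y => (A y - B y) / 2) (-(k : ℂ) ^ 2 * usol k f x - f x) x := by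
    intro x
    have := ((hA' x).sub (hB' x)).div_const 2
    refine this.congr_deriv ?_
    rw [husol]
    simp only [hcdef]
    field_simp
    linear_combination (-(k:ℂ) * (A x + B x)) * Complex.I_sq
  have hderiv2 : deriv (deriv (usol k f)) = fun x => -(k : ℂ) ^ 2 * usol k f x - f x := by
    rw [hderiv1]; exact funext fun x => (hu'' x).deriv
  have hudiff : Differentiable ℝ (usol k f) := fun x => (hu' x).differentiableAt
  have hucont : Continuous (usol k f) := hudiff.continuous
  refine ⟨?_, ?_, ?_, ?_⟩
  · -- smoothness
    rw [show (2 : WithTop ℕ∞) = 1 + 1 by norm_num, contDiff_succ_iff_deriv]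
    refine ⟨hudiff, by simp, ?_⟩
    rw [hderiv1, contDiff_one_iff_deriv]
    constructor
    · exact fun x => (hu'' x).differentiableAt
    · have : deriv (fun y => (A y - B y) / 2) = fun x => -(k : ℂ) ^ 2 * usol k f x - f x :=
        funext fun x => (hu'' x).deriv
      rw [this]
      exact (continuous_const.mul hucont).sub hf
  · -- the Helmholtz equation
    intro x
    rw [hderiv2]
    push_cast
    ring
  · -- outgoing on the right
    intro x hx
    have hAz : A x = 0 := by
      simp only [hA]
      rw [setIntegral_eq_zero_of_forall_eq_zero, mul_zero]
      intro t ht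
      have hft : f t = 0 := by
        by_contra h
        have h2 := (hsupp h).2
        have h3 : x < t := ht
        linarith
      rw [hft, mul_zero]
    rw [hderiv1, husol]
    simp only [hAz, hcdef]
    field_simp
    ring
  · -- outgoing on the left
    intro x hx
    have hBz : B x = 0 := by
      simp only [hB]
      rw [setIntegral_eq_zero_of_forall_eq_zero, mul_zero]
      intro t ht
      have hft : f t = 0 := by
        by_contra h
        have h2 := (hsupp h).1
        have h3 : t < x := ht
        linarith
      rw [hft, mul_zero]
    rw [hderiv1, husol]
    simp only [hBz, hcdef]
    field_simp
    ring

end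
end

section
/- Lemma 2.3(i), real case: for every real x ≥ 7/10, one has √(1+x²) + ln( x / (1 + √(1+x²)) ) > x − 1/(2x). -/
/-- Quartic Padé-type upper bound for the logarithm: for `a ≥ 0`,
`log(1+a) ≤ a(6+a)/(6+4a)`. -/
lemma log_le_pade (a : ℝ) (ha : 0 ≤ a) : Real.log (1 + a) ≤ a * (6 + a) / (6 + 4 * a) := by
  have hd : (0:ℝ) < 6 + 4 * a := by linarith
  set B := a * (6 + a) / (6 + 4 * a) with hBdef
  have hB0 : 0 ≤ B := by positivity
  have hsum : 1 + B + B ^ 2 / 2 + B ^ 3 / 6 + B ^ 4 / 24 ≤ Real.exp B := by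
    have h := Real.sum_le_exp_of_nonneg hB0 5
    simp [Finset.sum_range_succ, Nat.factorial] at h
    linarith
  have hpoly : a ≤ B + B ^ 2 / 2 + B ^ 3 / 6 + B ^ 4 / 24 := by
    rw [← sub_nonneg]
    have hident : B + B ^ 2 / 2 + B ^ 3 / 6 + B ^ 4 / 24 - a =
        (36 * a ^ 4 + 54 * a ^ 5 + 30 * a ^ 6 + (5/3) * a ^ 7 + (1/24) * a ^ 8)
          / (6 + 4 * a) ^ 4 := by
      rw [hBdef]; field_simp; ring
    rw [hident]; positivity
  rw [Real.log_le_iff_le_exp (by linarith)]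
  linarith

/-- Lemma 2.3(i), real case: for every real `x ≥ 7/10`,
`√(1+x²) + ln(x/(1+√(1+x²))) > x − 1/(2x)`. -/
theorem xi_real_lower_bound (x : ℝ) (hx : 7 / 10 ≤ x) :
    x - 1 / (2 * x) < Real.sqrt (1 + x ^ 2) + Real.log (x / (1 + Real.sqrt (1 + x ^ 2))) := by
  have hx0 : (0:ℝ) < x := by linarith
  set s := Real.sqrt (1 + x ^ 2) with hsdef
  have h1x : (0:ℝ) ≤ 1 + x ^ 2 := by positivity
  have hs0 : 0 ≤ s := Real.sqrt_nonneg _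
  have hs2 : s ^ 2 = 1 + x ^ 2 := Real.sq_sqrt h1x
  have hs1 : 1 ≤ s := by nlinarith
  have hsx : x < s := by nlinarith
  have hkey : 2 * x * s < 1 + 2 * x ^ 2 := by
    have h1 : (2 * x * s) ^ 2 < (1 + 2 * x ^ 2) ^ 2 := by nlinarith
    have h2 : (0:ℝ) ≤ 1 + 2 * x ^ 2 := by positivity
    exact lt_of_pow_lt_pow_left₀ 2 h2 h1
  set a := (1 + s - x) / x with hadef
  have ha : 0 ≤ a := by
    apply div_nonneg _ hx0.le
    linarith
  have hlog := log_le_pade a ha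
  have hxs : x / (1 + s) = (1 + a)⁻¹ := by
    rw [hadef]
    have h1s : (0:ℝ) < 1 + s := by linarith
    field_simp
    rw [show x + (1 + s - x) = 1 + s by ring, div_self h1s.ne']
  rw [hxs, Real.log_inv]
  have hd : (0:ℝ) < 6 + 4 * a := by linarith
  have hd2 : (0:ℝ) < x * (2 * x + 4 + 4 * s) := by positivity
  have haeq : a * (6 + a) / (6 + 4 * a) =
      (1 + s - x) * (5 * x + 1 + s) / (x * (2 * x + 4 + 4 * s)) := by
    rw [div_eq_div_iff hd.ne' hd2.ne', hadef]
    field_simp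
    ring
  have e1 : s - x + 1 / (2 * x) = (2 * x * (s - x) + 1) / (2 * x) := by
    field_simp
  have hB2 : a * (6 + a) / (6 + 4 * a) < s - x + 1 / (2 * x) := by
    rw [haeq, e1, div_lt_div_iff₀ hd2 (by linarith : (0:ℝ) < 2 * x)]
    have hpos : 0 < x * (1 + 2 * x ^ 2 - 2 * x * s) := by
      apply mul_pos hx0; linarith
    nlinarith
  linarith
end

section
/- Weighted Poincaré inequality on an annular interval (from the proof of the coercivity estimate (4.9) of Lemma 4.2): let 0 < R < Ř with 3 ln(Ř/R) ≤ 1/2, and let v : [R, Ř] → ℂ be absolutely continuous with v(R) = 0 and derivative v′ satisfying ∫_R^{Ř} r |v′(r)|² dr < ∞. Then ∫_R^{Ř} r |v(r)|² dr ≤ (Ř² − R²) ∫_R^{Ř} r |v′(r)|² dr. -/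
open MeasureTheory

/-- Weighted Poincaré inequality on an annular interval (from the proof of the coercivity
estimate (4.9) of Lemma 4.2): if `0 < R < Ř` with `3 ln(Ř/R) ≤ 1/2` and `v : [R, Ř] → ℂ`
is absolutely continuous with `v(R) = 0` and `∫_R^{Ř} r|v′|² < ∞`, then
`∫_R^{Ř} r|v|² ≤ (Ř² − R²) ∫_R^{Ř} r|v′|²`. -/
theorem weighted_poincare_annulus (R Rc : ℝ) (v v' : ℝ → ℂ)
    (hR : 0 < R) (hRRc : R < Rc) (hlog : 3 * Real.log (Rc / R) ≤ 1 / 2)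
    (hAC : ∀ a b : ℝ, R ≤ a → a ≤ b → b ≤ Rc → v b - v a = ∫ t in a..b, v' t)
    (hv0 : v R = 0)
    (hmeas : AEStronglyMeasurable v' (volume.restrict (Set.Icc R Rc)))
    (hint : IntegrableOn (fun r => r * ‖v' r‖ ^ 2) (Set.Icc R Rc)) :
    (∫ r in R..Rc, r * ‖v r‖ ^ 2) ≤ (Rc ^ 2 - R ^ 2) * ∫ r in R..Rc, r * ‖v' r‖ ^ 2 := by
  have hRle : R ≤ Rc := hRRc.le
  set I := ∫ r in R..Rc, r * ‖v' r‖ ^ 2 with hIdef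
  have hI0 : 0 ≤ I := intervalIntegral.integral_nonneg hRle fun t ht =>
    mul_nonneg (le_trans hR.le ht.1) (sq_nonneg _)
  -- Rc ≤ 3R
  have h3R : Rc ≤ 3 * R := by
    have h0 : (0:ℝ) < Rc / R := div_pos (hR.trans hRRc) hR
    have h1 : Rc / R ≤ Real.exp 1 := by
      rw [← Real.exp_log h0]
      exact Real.exp_le_exp.mpr (by linarith)
    have hexp3 : Real.exp 1 < 3 := by
      have := Real.exp_one_lt_d9; linarith
    have h2 : Rc / R ≤ 3 := le_of_lt (lt_of_le_of_lt h1 hexp3)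
    rw [div_le_iff₀ hR] at h2; linarith
  -- integrability facts
  have hII : ∀ {f : ℝ → ℝ}, IntegrableOn f (Set.Icc R Rc) →
      IntervalIntegrable f volume R Rc := fun h =>
    (intervalIntegrable_iff_integrableOn_Icc_of_le hRle).mpr h
  have hsqm : AEStronglyMeasurable (fun t => ‖v' t‖ ^ 2) (volume.restrict (Set.Icc R Rc)) := by
    have h := hmeas.norm
    simpa [pow_two, Pi.mul_def] using h.mul h
  have hsq : IntegrableOn (fun t => ‖v' t‖ ^ 2) (Set.Icc R Rc) := by
    refine Integrable.mono' (hint.const_mul (1/R)) hsqm ?_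
    filter_upwards [ae_restrict_mem measurableSet_Icc] with t ht
    have hRt : R ≤ t := ht.1
    have h1 : (0:ℝ) ≤ ‖v' t‖ ^ 2 := sq_nonneg _
    rw [Real.norm_eq_abs, abs_of_nonneg h1]
    have h2 : R * ‖v' t‖ ^ 2 ≤ t * ‖v' t‖ ^ 2 := mul_le_mul_of_nonneg_right hRt h1
    calc ‖v' t‖ ^ 2 = 1/R * (R * ‖v' t‖ ^ 2) := by field_simp
    _ ≤ 1/R * (t * ‖v' t‖ ^ 2) := mul_le_mul_of_nonneg_left h2 (by positivity)
  have hone : IntegrableOn (fun _ : ℝ => (1:ℝ)) (Set.Icc R Rc) :=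
    (integrableOn_const_iff (C := (1:ℝ))).mpr (Or.inr measure_Icc_lt_top)
  have habs : IntegrableOn (fun t => ‖v' t‖) (Set.Icc R Rc) := by
    refine Integrable.mono' (hone.add hsq) hmeas.norm ?_
    refine Filter.Eventually.of_forall fun t => ?_
    rw [Real.norm_eq_abs, abs_of_nonneg (norm_nonneg _)]
    show ‖v' t‖ ≤ 1 + ‖v' t‖ ^ 2
    nlinarith [sq_nonneg (2 * ‖v' t‖ - 1)]
  have hv'int : IntegrableOn v' (Set.Icc R Rc) :=
    Integrable.mono' habs hmeas (Filter.Eventually.of_forall fun t => le_rfl)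
  have hsqI : IntervalIntegrable (fun t => ‖v' t‖ ^ 2) volume R Rc := hII hsq
  have habsI : IntervalIntegrable (fun t => ‖v' t‖) volume R Rc := hII habs
  have hv'I : IntervalIntegrable v' volume R Rc :=
    (intervalIntegrable_iff_integrableOn_Icc_of_le hRle).mpr hv'int
  have hintI : IntervalIntegrable (fun r => r * ‖v' r‖ ^ 2) volume R Rc := hII hint
  -- J ≤ I/R
  have hJle : (∫ t in R..Rc, ‖v' t‖ ^ 2) ≤ 1/R * I := by
    have hrhs : IntervalIntegrable (fun t => 1/R * (t * ‖v' t‖ ^ 2)) volume R Rc :=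
      hintI.const_mul (1/R)
    have h := intervalIntegral.integral_mono_on hRle hsqI hrhs (fun t ht => by
      have h2 : R * ‖v' t‖ ^ 2 ≤ t * ‖v' t‖ ^ 2 :=
        mul_le_mul_of_nonneg_right ht.1 (sq_nonneg _)
      calc ‖v' t‖ ^ 2 = 1/R * (R * ‖v' t‖ ^ 2) := by field_simp
      _ ≤ 1/R * (t * ‖v' t‖ ^ 2) := mul_le_mul_of_nonneg_left h2 (by positivity))
    rwa [intervalIntegral.integral_const_mul] at h
  -- pointwise bound
  have key : ∀ r ∈ Set.Icc R Rc, ‖v r‖ ^ 2 ≤ 2 * I := by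
    intro r hr
    have hsub : Set.uIcc R r ⊆ Set.uIcc R Rc :=
      Set.uIcc_subset_uIcc Set.left_mem_uIcc
        (by rw [Set.uIcc_of_le hRle]; exact hr)
    have hvr : v r = ∫ t in R..r, v' t := by
      have h := hAC R r le_rfl hr.1 hr.2
      rwa [hv0, sub_zero] at h
    have hv'r : IntervalIntegrable v' volume R r := hv'I.mono_set hsub
    have hsqr : IntervalIntegrable (fun t => ‖v' t‖ ^ 2) volume R r := hsqI.mono_set hsub
    have habsr : IntervalIntegrable (fun t => ‖v' t‖) volume R r := habsI.mono_set hsub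
    have hJr : (∫ t in R..r, ‖v' t‖ ^ 2) ≤ 1/R * I := by
      have h1 : IntervalIntegrable (fun t => ‖v' t‖ ^ 2) volume r Rc :=
        hsqI.mono_set (Set.uIcc_subset_uIcc
          (by rw [Set.uIcc_of_le hRle]; exact hr) Set.right_mem_uIcc)
      have hadj := intervalIntegral.integral_add_adjacent_intervals hsqr h1
      have h3 : (0:ℝ) ≤ ∫ t in r..Rc, ‖v' t‖ ^ 2 :=
        intervalIntegral.integral_nonneg hr.2 fun _ _ => sq_nonneg _
      linarith
    have step : ∀ c : ℝ, 0 < c → ‖v r‖ ≤ (c * (2*R) + (1/R * I)/c) / 2 := by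
      intro c hc
      have h1 : ‖v r‖ ≤ ∫ t in R..r, ‖v' t‖ := by
        rw [hvr]; exact intervalIntegral.norm_integral_le_integral_norm hr.1
      have hrhsInt : IntervalIntegrable (fun t => (c + ‖v' t‖ ^ 2 / c) / 2) volume R r :=
        ((intervalIntegrable_const).add (hsqr.div_const c)).div_const 2
      have h2 : (∫ t in R..r, ‖v' t‖) ≤ ∫ t in R..r, (c + ‖v' t‖ ^ 2 / c) / 2 := by
        refine intervalIntegral.integral_mono_on hr.1 habsr hrhsInt fun t _ => ?_
        rw [le_div_iff₀ (by norm_num : (0:ℝ) < 2), ← sub_nonneg]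
        have he : (c + ‖v' t‖ ^ 2 / c) - ‖v' t‖ * 2 = (‖v' t‖ - c)^2 / c := by
          field_simp; ring
        rw [he]; positivity
      have h3 : (∫ t in R..r, (c + ‖v' t‖ ^ 2 / c) / 2)
          = ((r - R) * c + (∫ t in R..r, ‖v' t‖ ^ 2) / c) / 2 := by
        rw [intervalIntegral.integral_div, intervalIntegral.integral_add
          intervalIntegrable_const (hsqr.div_const c),
          intervalIntegral.integral_const, intervalIntegral.integral_div]
        simp [smul_eq_mul]
      have h4 : ((r - R) * c + (∫ t in R..r, ‖v' t‖ ^ 2) / c) / 2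
          ≤ (c * (2*R) + (1/R * I)/c) / 2 := by
        have hb1 : (r - R) * c ≤ c * (2*R) := by
          have : r - R ≤ 2*R := by
            have := hr.2; linarith
          nlinarith
        have hb2 : (∫ t in R..r, ‖v' t‖ ^ 2) / c ≤ (1/R * I)/c :=
          (div_le_div_iff_of_pos_right hc).mpr hJr
        linarith
      calc ‖v r‖ ≤ _ := h1
      _ ≤ _ := h2
      _ = _ := h3
      _ ≤ _ := h4
    by_cases hm : ‖v r‖ = 0
    · rw [hm]; nlinarith
    · have hm0 : 0 < ‖v r‖ := lt_of_le_of_ne (norm_nonneg _) (Ne.symm hm)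
      have hc : 0 < ‖v r‖ / (2*R) := by positivity
      have h := step _ hc
      have e1 : (‖v r‖ / (2*R)) * (2*R) = ‖v r‖ := by field_simp
      have e2 : (1/R * I) / (‖v r‖ / (2*R)) = 2*I/‖v r‖ := by
        have ha : ‖v r‖ ≠ 0 := hm
        field_simp [hR.ne']
      rw [e1, e2] at h
      have h5 : ‖v r‖ ≤ 2*I/‖v r‖ := by linarith
      have h6 : ‖v r‖ * ‖v r‖ ≤ 2*I := by
        rw [← le_div_iff₀ hm0]; exact h5
      nlinarith
  -- continuity / integrability of LHS
  have hcontF : ContinuousOn (fun x => ∫ t in R..x, v' t) (Set.Icc R Rc) := by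
    have := intervalIntegral.continuousOn_primitive_interval
      (f := v') (μ := volume) (a := R) (b := Rc) (by rwa [Set.uIcc_of_le hRle])
    rwa [Set.uIcc_of_le hRle] at this
  have hveq : Set.EqOn v (fun x => ∫ t in R..x, v' t) (Set.Icc R Rc) := fun r hr => by
    have h := hAC R r le_rfl hr.1 hr.2
    rw [hv0, sub_zero] at h; exact h
  have hcontv : ContinuousOn v (Set.Icc R Rc) := hcontF.congr hveq
  have hLHSint : IntervalIntegrable (fun r => r * ‖v r‖ ^ 2) volume R Rc := by
    apply ContinuousOn.intervalIntegrable
    rw [Set.uIcc_of_le hRle]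
    exact continuousOn_id.mul ((hcontv.norm).pow 2)
  have hmono : (∫ r in R..Rc, r * ‖v r‖ ^ 2) ≤ ∫ r in R..Rc, r * (2*I) := by
    refine intervalIntegral.integral_mono_on hRle hLHSint
      ((continuous_id.mul continuous_const).intervalIntegrable _ _) fun r hr => ?_
    exact mul_le_mul_of_nonneg_left (key r hr) (le_trans hR.le hr.1)
  have hval : (∫ r in R..Rc, r * (2*I)) = (Rc ^ 2 - R ^ 2) * I := by
    rw [intervalIntegral.integral_mul_const]
    rw [show (∫ r in R..Rc, r) = (Rc ^ 2 - R ^ 2) / 2 from integral_id]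
    ring
  linarith
end

section
/- Upper-bound ingredient for the inf–sup constant in Theorem 3.3: let u(x₁,x₂) = e^{ikx₁}(x₁² + x₂² − R²). Then for every continuously differentiable v : ℝ² → ℂ with compact support contained in the open disk B_R, | ∫_{B_R} ( ∇u · conj(∇v) − k² u · conj(v) ) dx | ≤ 2√π · R · (2 + kR) · ( ∫_{B_R} |v|² dx )^{1/2}. -/
open MeasureTheory Real

noncomputable section

/-- `u(x₁,x₂) = e^{ikx₁}(x₁² + x₂² − R²)` as a function on `ℝ²`. -/
def uTest (k R : ℝ) (p : ℝ × ℝ) : ℂ :=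
  Complex.exp (Complex.I * k * p.1) * ((p.1 ^ 2 + p.2 ^ 2 - R ^ 2 : ℝ) : ℂ)

/-- The open disk of radius `R` centered at the origin in `ℝ²`. -/
def diskR (R : ℝ) : Set (ℝ × ℝ) := {p : ℝ × ℝ | p.1 ^ 2 + p.2 ^ 2 < R ^ 2}

/-! Auxiliary machinery -/

def Wfun (k R : ℝ) (c₀ c₁ c₂ c₃ : ℂ) (p : ℝ × ℝ) : ℂ :=
  Complex.exp (Complex.I * k * p.1) *
    (c₀ + c₁ * p.1 + c₂ * p.2 + c₃ * ((p.1 ^ 2 + p.2 ^ 2 - R ^ 2 : ℝ) : ℂ))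

lemma wfun_continuous (k R : ℝ) (c₀ c₁ c₂ c₃ : ℂ) : Continuous (Wfun k R c₀ c₁ c₂ c₃) := by
  unfold Wfun; fun_prop

lemma wfun_hasFDerivAt (k R : ℝ) (c₀ c₁ c₂ c₃ : ℂ) (p : ℝ × ℝ) :
    HasFDerivAt (Wfun k R c₀ c₁ c₂ c₃)
      ((ContinuousLinearMap.fst ℝ ℝ ℝ).smulRight
          (Wfun k R (Complex.I * k * c₀ + c₁) (Complex.I * k * c₁ + 2 * c₃)
            (Complex.I * k * c₂) (Complex.I * k * c₃) p) +
        (ContinuousLinearMap.snd ℝ ℝ ℝ).smulRight (Wfun k R c₂ 0 (2 * c₃) 0 p)) p := by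
  have h1 : HasFDerivAt (fun p : ℝ × ℝ => (p.1 : ℂ))
      (Complex.ofRealCLM.comp (ContinuousLinearMap.fst ℝ ℝ ℝ)) p :=
    Complex.ofRealCLM.hasFDerivAt.comp p hasFDerivAt_fst
  have h2 : HasFDerivAt (fun p : ℝ × ℝ => (p.2 : ℂ))
      (Complex.ofRealCLM.comp (ContinuousLinearMap.snd ℝ ℝ ℝ)) p :=
    Complex.ofRealCLM.hasFDerivAt.comp p hasFDerivAt_snd
  have harg : HasFDerivAt (fun p : ℝ × ℝ => Complex.I * k * (p.1 : ℂ))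
      ((Complex.I * k) • (Complex.ofRealCLM.comp (ContinuousLinearMap.fst ℝ ℝ ℝ))) p :=
    h1.const_mul _
  have hE := harg.cexp
  have hq0 : HasFDerivAt (fun p : ℝ × ℝ => p.1 ^ 2 + p.2 ^ 2 - R ^ 2)
      ((p.1 • ContinuousLinearMap.fst ℝ ℝ ℝ + p.1 • ContinuousLinearMap.fst ℝ ℝ ℝ) +
        (p.2 • ContinuousLinearMap.snd ℝ ℝ ℝ + p.2 • ContinuousLinearMap.snd ℝ ℝ ℝ)) p := by
    simp only [pow_two]
    exact ((hasFDerivAt_fst.mul hasFDerivAt_fst).add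
      (hasFDerivAt_snd.mul hasFDerivAt_snd)).sub_const _
  have hq := Complex.ofRealCLM.hasFDerivAt.comp p hq0
  have hpoly := (((h1.const_mul c₁).const_add c₀).add (h2.const_mul c₂)).add (hq.const_mul c₃)
  have key := hE.mul hpoly
  refine key.congr_fderiv ?_
  refine ContinuousLinearMap.ext fun x => ?_
  simp only [Wfun, ContinuousLinearMap.add_apply, ContinuousLinearMap.smulRight_apply,
    ContinuousLinearMap.coe_comp', Function.comp_apply, ContinuousLinearMap.coe_fst',
    ContinuousLinearMap.coe_snd', ContinuousLinearMap.smul_apply, Complex.ofRealCLM_apply,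
    smul_eq_mul, Complex.real_smul, Pi.add_apply]
  push_cast
  ring

lemma wfun_differentiable (k R : ℝ) (c₀ c₁ c₂ c₃ : ℂ) :
    Differentiable ℝ (Wfun k R c₀ c₁ c₂ c₃) :=
  fun p => (wfun_hasFDerivAt k R c₀ c₁ c₂ c₃ p).differentiableAt

lemma wfun_fderiv_apply1 (k R : ℝ) (c₀ c₁ c₂ c₃ : ℂ) (p : ℝ × ℝ) :
    fderiv ℝ (Wfun k R c₀ c₁ c₂ c₃) p (1, 0)
      = Wfun k R (Complex.I * k * c₀ + c₁) (Complex.I * k * c₁ + 2 * c₃)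
          (Complex.I * k * c₂) (Complex.I * k * c₃) p := by
  rw [(wfun_hasFDerivAt k R c₀ c₁ c₂ c₃ p).fderiv]
  simp

lemma wfun_fderiv_apply2 (k R : ℝ) (c₀ c₁ c₂ c₃ : ℂ) (p : ℝ × ℝ) :
    fderiv ℝ (Wfun k R c₀ c₁ c₂ c₃) p (0, 1) = Wfun k R c₂ 0 (2 * c₃) 0 p := by
  rw [(wfun_hasFDerivAt k R c₀ c₁ c₂ c₃ p).fderiv]
  simp

lemma uTest_eq (k R : ℝ) : uTest k R = Wfun k R 0 0 0 1 := by
  funext p; simp [uTest, Wfun]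

lemma diskR_measurable (R : ℝ) : MeasurableSet (diskR R) := by
  have : IsOpen (diskR R) := isOpen_lt (by fun_prop) continuous_const
  exact this.measurableSet

lemma diskR_finite (R : ℝ) : volume (diskR R) < ⊤ := by
  have hsub : diskR R ⊆ Set.Ioo (-|R|) |R| ×ˢ Set.Ioo (-|R|) |R| := by
    rintro ⟨x, y⟩ h
    simp only [diskR, Set.mem_setOf_eq] at h
    have hx : |x| < |R| := by
      apply abs_lt_of_sq_lt_sq _ (abs_nonneg R)
      rw [sq_abs]; nlinarith [sq_nonneg y]
    have hy : |y| < |R| := by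
      apply abs_lt_of_sq_lt_sq _ (abs_nonneg R)
      rw [sq_abs]; nlinarith [sq_nonneg x]
    exact ⟨abs_lt.mp hx, abs_lt.mp hy⟩
  calc volume (diskR R) ≤ volume (Set.Ioo (-|R|) |R| ×ˢ Set.Ioo (-|R|) |R|) := measure_mono hsub
    _ = ENNReal.ofReal (|R| - -|R|) * ENNReal.ofReal (|R| - -|R|) := by
        rw [Measure.volume_eq_prod, Measure.prod_prod, Real.volume_Ioo]
    _ < ⊤ := ENNReal.mul_lt_top ENNReal.ofReal_lt_top ENNReal.ofReal_lt_top

lemma disk_integral (k R : ℝ) (hR : 0 < R) :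
    ∫ p in diskR R, (16 + 16 * k ^ 2 * p.1 ^ 2) = 4 * π * R ^ 2 * (4 + k ^ 2 * R ^ 2) := by
  have hmain :
      ∫ p : ℝ × ℝ, (diskR R).indicator (fun p => 16 + 16 * k ^ 2 * p.1 ^ 2) p
        = 4 * π * R ^ 2 * (4 + k ^ 2 * R ^ 2) := by
    rw [← integral_comp_polarCoord_symm]
    have hcong : ∀ p ∈ polarCoord.target,
        p.1 • (diskR R).indicator (fun p => 16 + 16 * k ^ 2 * p.1 ^ 2) (polarCoord.symm p)
          = (Set.Ioo 0 R ×ˢ (Set.univ : Set ℝ)).indicator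
              (fun q => 16 * q.1 + 16 * k ^ 2 * q.1 ^ 3 * Real.cos q.2 ^ 2) p := by
      rintro ⟨r, θ⟩ hp
      rw [polarCoord_target] at hp
      obtain ⟨hr, hθ⟩ := hp
      simp only [Set.mem_Ioi] at hr
      have hsymm : polarCoord.symm (r, θ) = (r * Real.cos θ, r * Real.sin θ) := rfl
      have hcond : (r * Real.cos θ) ^ 2 + (r * Real.sin θ) ^ 2 = r ^ 2 := by
        have := Real.sin_sq_add_cos_sq θ; nlinarith
      by_cases hrR : r < R
      · rw [Set.indicator_of_mem, Set.indicator_of_mem]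
        · simp only [hsymm, smul_eq_mul]; ring_nf
        · exact ⟨⟨hr, hrR⟩, trivial⟩
        · simp only [diskR, Set.mem_setOf_eq, hsymm, hcond]; nlinarith
      · rw [Set.indicator_of_notMem, Set.indicator_of_notMem]
        · simp
        · rintro ⟨⟨_, h2⟩, -⟩; exact hrR h2
        · simp only [diskR, Set.mem_setOf_eq, hsymm, hcond]
          push_neg at hrR ⊢
          nlinarith
    rw [setIntegral_congr_fun polarCoord.open_target.measurableSet hcong]
    rw [polarCoord_target, setIntegral_indicator ((measurableSet_Ioo).prod MeasurableSet.univ),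
      Set.prod_inter_prod, Set.inter_univ,
      show Set.Ioi (0:ℝ) ∩ Set.Ioo 0 R = Set.Ioo 0 R by
        rw [Set.inter_eq_right]; exact fun x hx => hx.1]
    rw [Measure.volume_eq_prod, setIntegral_prod]
    · have inner_eq : ∀ x ∈ Set.Ioo (0:ℝ) R,
          (∫ y in Set.Ioo (-π) π, (16 * x + 16 * k ^ 2 * x ^ 3 * Real.cos y ^ 2))
            = 32 * π * x + 16 * π * k ^ 2 * x ^ 3 := by
        intro x _
        rw [← integral_Ioc_eq_integral_Ioo,
          ← intervalIntegral.integral_of_le (by linarith [Real.pi_pos] : -π ≤ π),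
          intervalIntegral.integral_add ((continuous_const).intervalIntegrable _ _)
            (((by fun_prop : Continuous fun y : ℝ =>
              16 * k ^ 2 * x ^ 3 * Real.cos y ^ 2)).intervalIntegrable _ _),
          intervalIntegral.integral_const]
        have : ∫ y in (-π)..π, 16 * k ^ 2 * x ^ 3 * Real.cos y ^ 2
            = 16 * k ^ 2 * x ^ 3 * ∫ y in (-π)..π, Real.cos y ^ 2 :=
          intervalIntegral.integral_const_mul _ _
        rw [this, integral_cos_sq]
        simp [Real.sin_pi, Real.cos_pi]
        ring
      rw [setIntegral_congr_fun measurableSet_Ioo inner_eq,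
        ← integral_Ioc_eq_integral_Ioo,
        ← intervalIntegral.integral_of_le hR.le,
        intervalIntegral.integral_add
          (((by fun_prop : Continuous fun x : ℝ => 32 * π * x)).intervalIntegrable _ _)
          (((by fun_prop : Continuous fun x : ℝ => 16 * π * k ^ 2 * x ^ 3)).intervalIntegrable _ _)]
      have e1 : ∫ x in (0:ℝ)..R, 32 * π * x = 32 * π * (R ^ 2 / 2) := by
        rw [intervalIntegral.integral_const_mul, integral_id]; ring
      have e2 : ∫ x in (0:ℝ)..R, 16 * π * k ^ 2 * x ^ 3 = 16 * π * k ^ 2 * (R ^ 4 / 4) := by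
        rw [intervalIntegral.integral_const_mul, integral_pow]; norm_num
      rw [e1, e2]; ring
    · apply IntegrableOn.mono_set (t := Set.Icc 0 R ×ˢ Set.Icc (-π) π)
      · rw [← Measure.volume_eq_prod]
        exact ((by fun_prop : Continuous fun q : ℝ × ℝ =>
          16 * q.1 + 16 * k ^ 2 * q.1 ^ 3 * Real.cos q.2 ^ 2).continuousOn).integrableOn_compact
          (isCompact_Icc.prod isCompact_Icc)
      · exact Set.prod_mono Set.Ioo_subset_Icc_self Set.Ioo_subset_Icc_self
  rw [← hmain, integral_indicator (diskR_measurable R)]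

/-- Upper-bound ingredient for the inf–sup constant in Theorem 3.3: for
`u(x₁,x₂) = e^{ikx₁}(x₁²+x₂²−R²)` and every continuously differentiable `v : ℝ² → ℂ`
with compact support contained in the open disk `B_R`,
`|∫_{B_R} (∇u·conj(∇v) − k² u conj(v))| ≤ 2√π R (2+kR) ‖v‖_{L²(B_R)}`. -/
theorem infsup_upper_bound_ingredient (k R : ℝ) (hk : 0 < k) (hR : 0 < R)
    (v : ℝ × ℝ → ℂ) (hv : ContDiff ℝ 1 v) (hvcpt : HasCompactSupport v)
    (hvsupp : tsupport v ⊆ diskR R) :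
    ‖∫ p in diskR R,
        (fderiv ℝ (uTest k R) p (1, 0) * starRingEnd ℂ (fderiv ℝ v p (1, 0)) +
          fderiv ℝ (uTest k R) p (0, 1) * starRingEnd ℂ (fderiv ℝ v p (0, 1)) -
          (k ^ 2 : ℝ) * uTest k R p * starRingEnd ℂ (v p))‖ ≤
      2 * Real.sqrt π * R * (2 + k * R) * Real.sqrt (∫ p in diskR R, ‖v p‖ ^ 2) := by
  classical
  set w : ℝ × ℝ → ℂ := fun p => starRingEnd ℂ (v p) with hw_def
  have hvd : Differentiable ℝ v := hv.differentiable one_ne_zero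
  -- derivative of w
  have hwF : ∀ p, HasFDerivAt w
      ((Complex.conjCLE : ℂ →L[ℝ] ℂ).comp (fderiv ℝ v p)) p := by
    intro p
    have h := ((Complex.conjCLE : ℂ →L[ℝ] ℂ).hasFDerivAt.comp p (hvd p).hasFDerivAt)
    exact h.congr_of_eventuallyEq (Filter.Eventually.of_forall fun q => by
      simp [hw_def, Function.comp, Complex.conjCLE_apply])
  have hwd : Differentiable ℝ w := fun p => (hwF p).differentiableAt
  have hconj : ∀ (p : ℝ × ℝ) (d : ℝ × ℝ),
      fderiv ℝ w p d = starRingEnd ℂ (fderiv ℝ v p d) := by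
    intro p d
    rw [(hwF p).fderiv]
    simp [Complex.conjCLE_apply]
  -- vanishing off tsupport v
  have hv0 : ∀ p ∉ tsupport v, v p = 0 := fun p hp => image_eq_zero_of_notMem_tsupport hp
  have hw0 : ∀ p ∉ tsupport v, w p = 0 := by
    intro p hp; simp [hw_def, hv0 p hp]
  have hdv0 : ∀ p ∉ tsupport v, fderiv ℝ v p = 0 := by
    intro p hp
    by_contra h
    exact hp (support_fderiv_subset ℝ (Function.mem_support.mpr h))
  have hdw0 : ∀ (p : ℝ × ℝ) (d : ℝ × ℝ), p ∉ tsupport v → fderiv ℝ w p d = 0 := by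
    intro p d hp; rw [hconj, hdv0 p hp]; simp
  -- the pieces
  set g₁ : ℝ × ℝ → ℂ := Wfun k R (Complex.I * k * 0 + 0) (Complex.I * k * 0 + 2 * 1)
      (Complex.I * k * 0) (Complex.I * k * 1) with hg₁
  set g₂ : ℝ × ℝ → ℂ := Wfun k R 0 0 (2 * 1) 0 with hg₂
  set h₁ : ℝ × ℝ → ℂ := Wfun k R
      (Complex.I * k * (Complex.I * k * 0 + 0) + (Complex.I * k * 0 + 2 * 1))
      (Complex.I * k * (Complex.I * k * 0 + 2 * 1) + 2 * (Complex.I * k * 1))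
      (Complex.I * k * (Complex.I * k * 0)) (Complex.I * k * (Complex.I * k * 1)) with hh₁
  set h₂ : ℝ × ℝ → ℂ := Wfun k R (2 * 1) 0 (2 * 0) 0 with hh₂
  set Φ : ℝ × ℝ → ℂ := Wfun k R 4 (4 * (Complex.I * k)) 0 0 with hΦ
  set u0 : ℝ × ℝ → ℂ := Wfun k R 0 0 0 1 with hu0
  -- fderiv computations
  have hu1 : ∀ p, fderiv ℝ (uTest k R) p (1, 0) = g₁ p := by
    intro p; rw [uTest_eq, wfun_fderiv_apply1, hg₁]
  have hu2 : ∀ p, fderiv ℝ (uTest k R) p (0, 1) = g₂ p := by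
    intro p; rw [uTest_eq, wfun_fderiv_apply2, hg₂]
  have hg1d : ∀ p, fderiv ℝ g₁ p (1, 0) = h₁ p := by
    intro p; rw [hg₁, wfun_fderiv_apply1, hh₁]
  have hg2d : ∀ p, fderiv ℝ g₂ p (0, 1) = h₂ p := by
    intro p; rw [hg₂, wfun_fderiv_apply2, hh₂]
  -- pointwise sum identity
  have hsum : ∀ p, h₁ p + h₂ p + (k : ℂ) ^ 2 * u0 p = Φ p := by
    intro p
    simp only [hh₁, hh₂, hu0, hΦ, Wfun]
    linear_combination (Complex.exp (Complex.I * k * p.1) * (k : ℂ) ^ 2 *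
      ((p.1 ^ 2 + p.2 ^ 2 - R ^ 2 : ℝ) : ℂ)) * Complex.I_sq
  -- integrability helper
  have hint : ∀ (f g : ℝ × ℝ → ℂ), Continuous f → Continuous g →
      (∀ p ∉ tsupport v, g p = 0) → Integrable (fun p => f p * g p) volume := by
    intro f g hf hg hg0
    apply (hf.mul hg).integrable_of_hasCompactSupport
    apply HasCompactSupport.intro hvcpt
    intro p hp
    simp [hg0 p hp]
  have hwcont : Continuous w := by
    have : Continuous (starRingEnd ℂ) := Complex.continuous_conj
    exact this.comp hv.continuous
  have hD1cont : Continuous fun p => fderiv ℝ w p ((1:ℝ), (0:ℝ)) := by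
    have h1 : Continuous fun p => fderiv ℝ v p ((1:ℝ), (0:ℝ)) :=
      (ContinuousLinearMap.apply ℝ ℂ ((1:ℝ), (0:ℝ))).continuous.comp
        (hv.continuous_fderiv one_ne_zero)
    have : (fun p => fderiv ℝ w p ((1:ℝ), (0:ℝ)))
        = fun p => starRingEnd ℂ (fderiv ℝ v p ((1:ℝ), (0:ℝ))) := funext fun p => hconj p _
    rw [this]
    exact Complex.continuous_conj.comp h1
  have hD2cont : Continuous fun p => fderiv ℝ w p ((0:ℝ), (1:ℝ)) := by
    have h1 : Continuous fun p => fderiv ℝ v p ((0:ℝ), (1:ℝ)) :=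
      (ContinuousLinearMap.apply ℝ ℂ ((0:ℝ), (1:ℝ))).continuous.comp
        (hv.continuous_fderiv one_ne_zero)
    have : (fun p => fderiv ℝ w p ((0:ℝ), (1:ℝ)))
        = fun p => starRingEnd ℂ (fderiv ℝ v p ((0:ℝ), (1:ℝ))) := funext fun p => hconj p _
    rw [this]
    exact Complex.continuous_conj.comp h1
  -- integrable products
  have Ia : Integrable (fun p => g₁ p * fderiv ℝ w p (1, 0)) volume :=
    hint _ _ (wfun_continuous _ _ _ _ _ _) hD1cont (fun p hp => hdw0 p _ hp)
  have Ic : Integrable (fun p => g₂ p * fderiv ℝ w p (0, 1)) volume :=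
    hint _ _ (wfun_continuous _ _ _ _ _ _) hD2cont (fun p hp => hdw0 p _ hp)
  have Ib : Integrable (fun p => h₁ p * w p) volume :=
    hint _ _ (wfun_continuous _ _ _ _ _ _) hwcont hw0
  have Id : Integrable (fun p => h₂ p * w p) volume :=
    hint _ _ (wfun_continuous _ _ _ _ _ _) hwcont hw0
  have Ie : Integrable (fun p => (k : ℂ) ^ 2 * u0 p * w p) volume :=
    hint _ _ (by exact (continuous_const.mul (wfun_continuous _ _ _ _ _ _))) hwcont hw0
  have Ig1w : Integrable (fun p => g₁ p * w p) volume :=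
    hint _ _ (wfun_continuous _ _ _ _ _ _) hwcont hw0
  have Ig2w : Integrable (fun p => g₂ p * w p) volume :=
    hint _ _ (wfun_continuous _ _ _ _ _ _) hwcont hw0
  have IΦw : Integrable (fun p => Φ p * w p) volume :=
    hint _ _ (wfun_continuous _ _ _ _ _ _) hwcont hw0
  -- integration by parts
  have I1 : ∫ p, g₁ p * fderiv ℝ w p (1, 0) = - ∫ p, h₁ p * w p := by
    have := integral_mul_fderiv_eq_neg_fderiv_mul_of_integrable (μ := volume)
      (f := g₁) (g := w) (v := ((1:ℝ), (0:ℝ)))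
      (by rw [show (fun x => fderiv ℝ g₁ x ((1:ℝ),(0:ℝ)) * w x) = fun x => h₁ x * w x from
            funext fun x => by simp only [hg1d]]; exact Ib)
      Ia Ig1w (fun x _ => wfun_differentiable _ _ _ _ _ _ x) (fun x _ => hwd x)
    rw [this]
    congr 1
    exact integral_congr_ae (Filter.Eventually.of_forall fun x => by simp only [hg1d])
  have I2 : ∫ p, g₂ p * fderiv ℝ w p (0, 1) = - ∫ p, h₂ p * w p := by
    have := integral_mul_fderiv_eq_neg_fderiv_mul_of_integrable (μ := volume)
      (f := g₂) (g := w) (v := ((0:ℝ), (1:ℝ)))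
      (by rw [show (fun x => fderiv ℝ g₂ x ((0:ℝ),(1:ℝ)) * w x) = fun x => h₂ x * w x from
            funext fun x => by simp only [hg2d]]; exact Id)
      Ic Ig2w (fun x _ => wfun_differentiable _ _ _ _ _ _ x) (fun x _ => hwd x)
    rw [this]
    congr 1
    exact integral_congr_ae (Filter.Eventually.of_forall fun x => by simp only [hg2d])
  -- main integral identity
  set G : ℝ × ℝ → ℂ := fun p =>
    g₁ p * fderiv ℝ w p (1, 0) + g₂ p * fderiv ℝ w p (0, 1) - (k : ℂ) ^ 2 * u0 p * w p with hG
  have step1 : (∫ p in diskR R,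
        (fderiv ℝ (uTest k R) p (1, 0) * starRingEnd ℂ (fderiv ℝ v p (1, 0)) +
          fderiv ℝ (uTest k R) p (0, 1) * starRingEnd ℂ (fderiv ℝ v p (0, 1)) -
          (k ^ 2 : ℝ) * uTest k R p * starRingEnd ℂ (v p)))
      = ∫ p in diskR R, G p := by
    apply integral_congr_ae (Filter.Eventually.of_forall fun p => ?_)
    rw [hG, hu1, hu2, ← hconj, ← hconj]
    have : uTest k R p = u0 p := by rw [uTest_eq]
    rw [this]
    push_cast
    ring_nf
    rfl
  have step2 : ∫ p in diskR R, G p = ∫ p, G p := by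
    apply setIntegral_eq_integral_of_forall_compl_eq_zero
    intro p hp
    have hp' : p ∉ tsupport v := fun h => hp (hvsupp h)
    simp [hG, hw0 p hp', hdw0 p _ hp']
  have step3 : ∫ p, G p = - ∫ p, Φ p * w p := by
    have Iac : Integrable (fun p => g₁ p * fderiv ℝ w p (1, 0)
        + g₂ p * fderiv ℝ w p (0, 1)) volume := Ia.add Ic
    have Ibd : Integrable (fun p => h₁ p * w p + h₂ p * w p) volume := Ib.add Id
    rw [hG]
    rw [integral_sub Iac Ie, integral_add Ia Ic, I1, I2]
    have : ∫ p, Φ p * w p = (∫ p, h₁ p * w p) + (∫ p, h₂ p * w p)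
        + ∫ p, (k : ℂ) ^ 2 * u0 p * w p := by
      rw [← integral_add Ib Id, ← integral_add Ibd Ie]
      apply integral_congr_ae (Filter.Eventually.of_forall fun p => ?_)
      have := hsum p
      linear_combination w p * this.symm
    rw [this]
    ring
  have step4 : ∫ p, Φ p * w p = ∫ p in diskR R, Φ p * w p := by
    rw [setIntegral_eq_integral_of_forall_compl_eq_zero]
    intro p hp
    have hp' : p ∉ tsupport v := fun h => hp (hvsupp h)
    simp [hw0 p hp']
  -- norm bound on Φ
  have hΦnorm : ∀ p : ℝ × ℝ, ‖Φ p‖ ^ 2 = 16 + 16 * k ^ 2 * p.1 ^ 2 := by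
    intro p
    rw [hΦ]
    simp only [Wfun]
    rw [norm_mul, mul_pow]
    have e1 : ‖Complex.exp (Complex.I * k * p.1)‖ = 1 := by
      rw [Complex.norm_exp]
      simp
    rw [e1, one_pow, one_mul, Complex.sq_norm]
    simp only [Complex.normSq_apply, Complex.add_re, Complex.add_im, Complex.mul_re,
      Complex.mul_im, Complex.I_re, Complex.I_im, Complex.ofReal_re, Complex.ofReal_im,
      Complex.zero_re, Complex.zero_im, Complex.re_ofNat, Complex.im_ofNat]
    ring
  -- finite measure on the disk
  haveI hfin : IsFiniteMeasure (volume.restrict (diskR R)) :=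
    ⟨by rw [Measure.restrict_apply_univ]; exact diskR_finite R⟩
  have hΦmem : MemLp Φ (ENNReal.ofReal 2) (volume.restrict (diskR R)) := by
    apply MemLp.of_bound ((wfun_continuous _ _ _ _ _ _).aestronglyMeasurable) (4 + 4 * k * R)
    rw [ae_restrict_iff' (diskR_measurable R)]
    refine Filter.Eventually.of_forall fun p hp => ?_
    have h2 := hΦnorm p
    have hp1 : p.1 ^ 2 < R ^ 2 := by
      have := hp; simp only [diskR, Set.mem_setOf_eq] at this; nlinarith [sq_nonneg p.2]
    nlinarith [norm_nonneg (Φ p), sq_nonneg p.1, mul_pos hk hR,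
      sq_nonneg (‖Φ p‖ - (4 + 4 * k * R)), sq_nonneg (‖Φ p‖ + (4 + 4 * k * R)),
      mul_pos (mul_pos hk hk) (mul_pos hR hR)]
  have hwmem : MemLp w (ENNReal.ofReal 2) (volume.restrict (diskR R)) := by
    have h2 : (ENNReal.ofReal (2:ℝ)) = 2 := by norm_num
    rw [h2]
    have : MemLp w 2 volume := by
      refine (memLp_two_iff_integrable_sq_norm hwcont.aestronglyMeasurable).mpr ?_
      apply Continuous.integrable_of_hasCompactSupport
      · exact (hwcont.norm).pow 2
      · apply HasCompactSupport.intro hvcpt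
        intro p hp; simp [hw0 p hp]
    exact this.restrict _
  have hCS := integral_mul_norm_le_Lp_mul_Lq (μ := volume.restrict (diskR R))
    Real.HolderConjugate.two_two hΦmem hwmem
  have hrpow : ∀ x : ℝ, x ^ (2:ℝ) = x ^ (2:ℕ) := fun x => by
    rw [← Real.rpow_natCast x 2]; norm_num
  have hJ : ∫ p in diskR R, ‖Φ p‖ ^ 2 = 4 * π * R ^ 2 * (4 + k ^ 2 * R ^ 2) := by
    rw [show (fun p : ℝ × ℝ => ‖Φ p‖ ^ 2) = fun p : ℝ × ℝ => 16 + 16 * k ^ 2 * p.1 ^ 2 from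
      funext hΦnorm]
    exact disk_integral k R hR
  have hC : 0 ≤ 2 * Real.sqrt π * R * (2 + k * R) := by
    apply mul_nonneg (mul_nonneg (by positivity) hR.le)
    nlinarith [mul_pos hk hR]
  have hsqrtJ : Real.sqrt (∫ p in diskR R, ‖Φ p‖ ^ 2) ≤ 2 * Real.sqrt π * R * (2 + k * R) := by
    rw [hJ, show (2 * Real.sqrt π * R * (2 + k * R))
        = Real.sqrt ((2 * Real.sqrt π * R * (2 + k * R)) ^ 2) from (Real.sqrt_sq hC).symm]
    apply Real.sqrt_le_sqrt
    have hπ : (Real.sqrt π) ^ 2 = π := Real.sq_sqrt pi_pos.le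
    nlinarith [pi_pos, mul_pos hk hR, mul_pos (mul_pos pi_pos (mul_pos hk hR)) (mul_pos hR hR)]
  calc ‖∫ p in diskR R,
        (fderiv ℝ (uTest k R) p (1, 0) * starRingEnd ℂ (fderiv ℝ v p (1, 0)) +
          fderiv ℝ (uTest k R) p (0, 1) * starRingEnd ℂ (fderiv ℝ v p (0, 1)) -
          (k ^ 2 : ℝ) * uTest k R p * starRingEnd ℂ (v p))‖
      = ‖∫ p in diskR R, Φ p * w p‖ := by rw [step1, step2, step3, norm_neg, step4]
    _ ≤ ∫ p in diskR R, ‖Φ p * w p‖ := norm_integral_le_integral_norm _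
    _ = ∫ p in diskR R, ‖Φ p‖ * ‖w p‖ := by simp_rw [norm_mul]
    _ ≤ (∫ p in diskR R, ‖Φ p‖ ^ (2:ℝ)) ^ (1/(2:ℝ)) *
          (∫ p in diskR R, ‖w p‖ ^ (2:ℝ)) ^ (1/(2:ℝ)) := hCS
    _ = Real.sqrt (∫ p in diskR R, ‖Φ p‖ ^ 2) *
          Real.sqrt (∫ p in diskR R, ‖v p‖ ^ 2) := by
        have hwv : ∫ p in diskR R, ‖w p‖ ^ (2:ℕ) = ∫ p in diskR R, ‖v p‖ ^ (2:ℕ) :=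
          integral_congr_ae (Filter.Eventually.of_forall fun p => by simp [hw_def])
        simp_rw [hrpow, ← Real.sqrt_eq_rpow]
        rw [hwv]
    _ ≤ (2 * Real.sqrt π * R * (2 + k * R)) * Real.sqrt (∫ p in diskR R, ‖v p‖ ^ 2) :=
        mul_le_mul_of_nonneg_right hsqrtJ (Real.sqrt_nonneg _)
end
end
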